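/- Let G be a finite simple graph with vertex set V. For every vertex v: the sum over all neighbors a of v of binomial(n2c(v,a), 2) equals 3·F6'(v) + F8'(v). -/

import Mathlib

open Finset
open scoped Classical

namespace FourProfiles

variable {V : Type*} [Fintype V] [DecidableEq V]

/-- Number of 3-element subsets of `V \ {v}` admitting a labeling `a, b, c` satisfying `P`. -/
noncomputable def cnt3 (v : V) (P : V → V → V → Prop) : ℕ :=
  (((Finset.univ : Finset V).powersetCard 3).filter
    (fun s => v ∉ s ∧ ∃ a ∈ s, ∃ b ∈ s, ∃ c ∈ s, s = {a, b, c} ∧ P a b c)).card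

variable (G : SimpleGraph V)

/-- Induced subgraph on `{v,a,b,c}` has exactly one edge, with `v` an endpoint. -/
noncomputable def F1 (v : V) : ℕ := cnt3 v fun a b c =>
  G.Adj v a ∧ ¬G.Adj v b ∧ ¬G.Adj v c ∧ ¬G.Adj a b ∧ ¬G.Adj a c ∧ ¬G.Adj b c

/-- Induced subgraph on `{v,a,b,c}` is a perfect matching (two disjoint edges). -/
noncomputable def F2 (v : V) : ℕ := cnt3 v fun a b c =>
  G.Adj v a ∧ G.Adj b c ∧ ¬G.Adj v b ∧ ¬G.Adj v c ∧ ¬G.Adj a b ∧ ¬G.Adj a c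

/-- Two-edge path plus isolated vertex, `v` an endpoint of the path. -/
noncomputable def F3 (v : V) : ℕ := cnt3 v fun a b c =>
  G.Adj v a ∧ G.Adj a b ∧ ¬G.Adj v b ∧ ¬G.Adj v c ∧ ¬G.Adj a c ∧ ¬G.Adj b c

/-- Two-edge path plus isolated vertex, `v` the middle vertex of the path. -/
noncomputable def F3' (v : V) : ℕ := cnt3 v fun a b c =>
  G.Adj v a ∧ G.Adj v b ∧ ¬G.Adj a b ∧ ¬G.Adj v c ∧ ¬G.Adj a c ∧ ¬G.Adj b c

/-- Path on four vertices, `v` an endpoint. -/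
noncomputable def F4 (v : V) : ℕ := cnt3 v fun a b c =>
  G.Adj v a ∧ G.Adj a b ∧ G.Adj b c ∧ ¬G.Adj v b ∧ ¬G.Adj v c ∧ ¬G.Adj a c

/-- Path on four vertices, `v` an internal (degree-2) vertex. -/
noncomputable def F4' (v : V) : ℕ := cnt3 v fun a b c =>
  G.Adj v a ∧ G.Adj v b ∧ G.Adj b c ∧ ¬G.Adj a b ∧ ¬G.Adj v c ∧ ¬G.Adj a c

/-- Triangle plus isolated vertex, `v` in the triangle. -/
noncomputable def F5 (v : V) : ℕ := cnt3 v fun a b c =>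
  G.Adj v a ∧ G.Adj v b ∧ G.Adj a b ∧ ¬G.Adj v c ∧ ¬G.Adj a c ∧ ¬G.Adj b c

/-- Star `K_{1,3}`, `v` a leaf. -/
noncomputable def F6 (v : V) : ℕ := cnt3 v fun a b c =>
  G.Adj v a ∧ G.Adj a b ∧ G.Adj a c ∧ ¬G.Adj v b ∧ ¬G.Adj v c ∧ ¬G.Adj b c

/-- Star `K_{1,3}`, `v` the center. -/
noncomputable def F6' (v : V) : ℕ := cnt3 v fun a b c =>
  G.Adj v a ∧ G.Adj v b ∧ G.Adj v c ∧ ¬G.Adj a b ∧ ¬G.Adj a c ∧ ¬G.Adj b c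

/-- 4-cycle. -/
noncomputable def F7 (v : V) : ℕ := cnt3 v fun a b c =>
  G.Adj v a ∧ G.Adj a b ∧ G.Adj b c ∧ G.Adj v c ∧ ¬G.Adj v b ∧ ¬G.Adj a c

/-- Paw (triangle with a pendant edge), `v` the pendant (degree-1) vertex. -/
noncomputable def F8 (v : V) : ℕ := cnt3 v fun a b c =>
  G.Adj v a ∧ G.Adj a b ∧ G.Adj a c ∧ G.Adj b c ∧ ¬G.Adj v b ∧ ¬G.Adj v c

/-- Paw, `v` the degree-3 vertex. -/
noncomputable def F8' (v : V) : ℕ := cnt3 v fun a b c =>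
  G.Adj v a ∧ G.Adj v b ∧ G.Adj a b ∧ G.Adj v c ∧ ¬G.Adj a c ∧ ¬G.Adj b c

/-- Paw, `v` one of the two degree-2 vertices. -/
noncomputable def F8'' (v : V) : ℕ := cnt3 v fun a b c =>
  G.Adj v a ∧ G.Adj v b ∧ G.Adj a b ∧ G.Adj a c ∧ ¬G.Adj v c ∧ ¬G.Adj b c

/-- Diamond (`K4` minus one edge), `v` one of the two degree-2 vertices. -/
noncomputable def F9 (v : V) : ℕ := cnt3 v fun a b c =>
  G.Adj v a ∧ G.Adj v b ∧ G.Adj a b ∧ G.Adj a c ∧ G.Adj b c ∧ ¬G.Adj v c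

/-- Diamond, `v` one of the two degree-3 vertices. -/
noncomputable def F9' (v : V) : ℕ := cnt3 v fun a b c =>
  G.Adj v a ∧ G.Adj v b ∧ G.Adj v c ∧ G.Adj a b ∧ G.Adj a c ∧ ¬G.Adj b c

/-- Complete graph `K4`. -/
noncomputable def F10 (v : V) : ℕ := cnt3 v fun a b c =>
  G.Adj v a ∧ G.Adj v b ∧ G.Adj v c ∧ G.Adj a b ∧ G.Adj a c ∧ G.Adj b c

/-- `|V \ (Γ(v) ∪ Γ(a))|`. -/
noncomputable def n1e (v a : V) : ℕ :=
  (Finset.univ.filter fun x => ¬G.Adj v x ∧ ¬G.Adj a x).card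

/-- `|Γ(v) \ (Γ(a) ∪ {a})|`. -/
noncomputable def n2c (v a : V) : ℕ :=
  (Finset.univ.filter fun x => G.Adj v x ∧ ¬G.Adj a x ∧ x ≠ a).card

/-- `|Γ(a) \ (Γ(v) ∪ {v})|`. -/
noncomputable def n2e (v a : V) : ℕ :=
  (Finset.univ.filter fun x => G.Adj a x ∧ ¬G.Adj v x ∧ x ≠ v).card

/-- `|Γ(v) ∩ Γ(a)|`. -/
noncomputable def n3 (v a : V) : ℕ :=
  (Finset.univ.filter fun x => G.Adj v x ∧ G.Adj a x).card

/-- Number of edges of `G` with neither endpoint in `Γ(v) ∪ {v}`. -/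
noncomputable def n1d (v : V) : ℕ :=
  (((Finset.univ : Finset V).powersetCard 2).filter
    (fun s => ∃ a ∈ s, ∃ b ∈ s, s = {a, b} ∧ G.Adj a b ∧
      ¬G.Adj v a ∧ ¬G.Adj v b ∧ a ≠ v ∧ b ≠ v)).card

/-- Number of triangles of `G` containing `a`. -/
noncomputable def tri (a : V) : ℕ :=
  (((Finset.univ : Finset V).powersetCard 2).filter
    (fun s => ∃ x ∈ s, ∃ y ∈ s, s = {x, y} ∧ G.Adj a x ∧ G.Adj a y ∧ G.Adj x y)).card

/-- Number of 2-element subsets `{x,y}` of `V \ {a}` inducing a two-edge path with `a`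
an endpoint. -/
noncomputable def twoPathEnd (a : V) : ℕ :=
  (((Finset.univ : Finset V).powersetCard 2).filter
    (fun s => a ∉ s ∧ ∃ x ∈ s, ∃ y ∈ s, s = {x, y} ∧ G.Adj a x ∧ G.Adj x y ∧ ¬G.Adj a y)).card

/-- Number of 2-element subsets `{b,c} ⊆ Γ(a)` with `b` adjacent to `c`, `b ∈ Γ(v)`,
`c ∈ Γ(v)`. -/
noncomputable def triIn (v a : V) : ℕ :=
  (((Finset.univ : Finset V).powersetCard 2).filter
    (fun s => ∃ b ∈ s, ∃ c ∈ s, s = {b, c} ∧ G.Adj a b ∧ G.Adj a c ∧ G.Adj b c ∧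
      G.Adj v b ∧ G.Adj v c)).card

/-- Number of 2-element subsets `{b,c} ⊆ Γ(a)` with `b` adjacent to `c`, `b ∉ Γ(v)`,
`c ∉ Γ(v)`. -/
noncomputable def triOut (v a : V) : ℕ :=
  (((Finset.univ : Finset V).powersetCard 2).filter
    (fun s => ∃ b ∈ s, ∃ c ∈ s, s = {b, c} ∧ G.Adj a b ∧ G.Adj a c ∧ G.Adj b c ∧
      ¬G.Adj v b ∧ ¬G.Adj v c)).card

private lemma pair_card_le {W : Type*} [DecidableEq W] (x y : W) :
    ({x, y} : Finset W).card ≤ 2 := by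
  have := Finset.card_insert_le x ({y} : Finset W)
  simpa using this

private lemma card3_ne {W : Type*} [DecidableEq W] {a b c : W}
    (h : ({a, b, c} : Finset W).card = 3) : a ≠ b ∧ a ≠ c ∧ b ≠ c := by
  refine ⟨?_, ?_, ?_⟩ <;> rintro rfl
  · have hsub : ({a, a, c} : Finset W) ⊆ {a, c} := by
      intro t ht; simp at ht ⊢; tauto
    have := (Finset.card_le_card hsub).trans (pair_card_le a c)
    omega
  · have hsub : ({a, b, a} : Finset W) ⊆ {a, b} := by
      intro t ht; simp at ht ⊢; tauto
    have := (Finset.card_le_card hsub).trans (pair_card_le a b)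
    omega
  · have hsub : ({a, b, b} : Finset W) ⊆ {a, b} := by
      intro t ht; simp at ht ⊢; tauto
    have := (Finset.card_le_card hsub).trans (pair_card_le a b)
    omega

private lemma card_three {W : Type*} [DecidableEq W] {x y z : W}
    (hxy : x ≠ y) (hxz : x ≠ z) (hyz : y ≠ z) : ({x, y, z} : Finset W).card = 3 := by
  rw [Finset.card_insert_of_notMem (by simp [hxy, hxz]),
    Finset.card_insert_of_notMem (by simp [hyz]), Finset.card_singleton]

private lemma two_mul_choose_two (n : ℕ) : 2 * n.choose 2 = n * (n - 1) := by
  cases n with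
  | zero => simp
  | succ m =>
    rw [Nat.choose_two_right, Nat.succ_sub_one]
    exact Nat.mul_div_cancel' ((mul_comm m (m + 1)) ▸ (Nat.even_mul_succ_self m).two_dvd)

private lemma perm3 {W : Type*} {a b c x y z : W}
    (hx : x = a ∨ x = b ∨ x = c) (hy : y = a ∨ y = b ∨ y = c)
    (hz : z = a ∨ z = b ∨ z = c) (q6 : y ≠ x) (q7 : z ≠ x) (q8 : y ≠ z) :
    (x = a ∧ y = b ∧ z = c) ∨ (x = a ∧ y = c ∧ z = b) ∨ (x = b ∧ y = a ∧ z = c) ∨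
    (x = b ∧ y = c ∧ z = a) ∨ (x = c ∧ y = a ∧ z = b) ∨ (x = c ∧ y = b ∧ z = a) := by
  rcases hx with rfl | rfl | rfl <;> rcases hy with rfl | rfl | rfl <;>
    rcases hz with rfl | rfl | rfl <;>
    first
      | exact absurd rfl q6
      | exact absurd rfl q7
      | exact absurd rfl q8
      | simp

private lemma card_six {W : Type*} [DecidableEq W] {p1 p2 p3 p4 p5 p6 : W}
    (h : p1 ≠ p2 ∧ p1 ≠ p3 ∧ p1 ≠ p4 ∧ p1 ≠ p5 ∧ p1 ≠ p6 ∧ p2 ≠ p3 ∧ p2 ≠ p4 ∧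
      p2 ≠ p5 ∧ p2 ≠ p6 ∧ p3 ≠ p4 ∧ p3 ≠ p5 ∧ p3 ≠ p6 ∧ p4 ≠ p5 ∧ p4 ≠ p6 ∧ p5 ≠ p6) :
    ({p1, p2, p3, p4, p5, p6} : Finset W).card = 6 := by
  obtain ⟨h12, h13, h14, h15, h16, h23, h24, h25, h26, h34, h35, h36, h45, h46, h56⟩ := h
  have m1 : p1 ∉ ({p2, p3, p4, p5, p6} : Finset W) := by simp [h12, h13, h14, h15, h16]
  have m2 : p2 ∉ ({p3, p4, p5, p6} : Finset W) := by simp [h23, h24, h25, h26]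
  have m3 : p3 ∉ ({p4, p5, p6} : Finset W) := by simp [h34, h35, h36]
  have m4 : p4 ∉ ({p5, p6} : Finset W) := by simp [h45, h46]
  have m5 : p5 ∉ ({p6} : Finset W) := by simp [h56]
  rw [Finset.card_insert_of_notMem m1, Finset.card_insert_of_notMem m2,
    Finset.card_insert_of_notMem m3, Finset.card_insert_of_notMem m4,
    Finset.card_insert_of_notMem m5, Finset.card_singleton]

section Fibers

variable {G : SimpleGraph V}

private lemma fiber6 [DecidableRel G.Adj] {v : V} {s : Finset V}
    {a b c : V} (hsabc : s = {a, b, c}) (nab : a ≠ b) (nac : a ≠ c) (nbc : b ≠ c)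
    (hva : G.Adj v a) (hvb : G.Adj v b) (hvc : G.Adj v c)
    (hab : ¬G.Adj a b) (hac : ¬G.Adj a c) (hbc : ¬G.Adj b c) :
    ((Finset.univ : Finset (V × V × V)).filter (fun p =>
      ((G.Adj v p.1 ∧ G.Adj v p.2.1 ∧ G.Adj v p.2.2 ∧
      ¬G.Adj p.1 p.2.1 ∧ ¬G.Adj p.1 p.2.2 ∧ p.2.1 ≠ p.1 ∧ p.2.2 ≠ p.1 ∧ p.2.1 ≠ p.2.2) ∧
      ¬G.Adj p.2.1 p.2.2) ∧ ({p.1, p.2.1, p.2.2} : Finset V) = s)).card = 6 := by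
  have hba : ¬G.Adj b a := fun h => hab h.symm
  have hca : ¬G.Adj c a := fun h => hac h.symm
  have hcb : ¬G.Adj c b := fun h => hbc h.symm
  have e1 : ({a, c, b} : Finset V) = s := by rw [Finset.pair_comm c b, hsabc]
  have e2 : ({b, a, c} : Finset V) = s := by rw [Finset.insert_comm b a, hsabc]
  have e3 : ({b, c, a} : Finset V) = s := by
    rw [Finset.pair_comm c a, Finset.insert_comm b a, hsabc]
  have e4 : ({c, a, b} : Finset V) = s := by
    rw [Finset.insert_comm c a, Finset.pair_comm c b, hsabc]
  have e5 : ({c, b, a} : Finset V) = s := by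
    rw [Finset.pair_comm b a, Finset.insert_comm c a, Finset.pair_comm c b, hsabc]
  have hfe : ((Finset.univ : Finset (V × V × V)).filter (fun p =>
      ((G.Adj v p.1 ∧ G.Adj v p.2.1 ∧ G.Adj v p.2.2 ∧
      ¬G.Adj p.1 p.2.1 ∧ ¬G.Adj p.1 p.2.2 ∧ p.2.1 ≠ p.1 ∧ p.2.2 ≠ p.1 ∧ p.2.1 ≠ p.2.2) ∧
      ¬G.Adj p.2.1 p.2.2) ∧ ({p.1, p.2.1, p.2.2} : Finset V) = s))
      = ({(a,b,c),(a,c,b),(b,a,c),(b,c,a),(c,a,b),(c,b,a)} : Finset (V × V × V)) := by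
    ext ⟨x, y, z⟩
    simp only [Finset.mem_filter, Finset.mem_univ, true_and, Finset.mem_insert,
      Finset.mem_singleton, Prod.mk.injEq]
    constructor
    · rintro ⟨⟨⟨q1, q2, q3, q4, q5, q6, q7, q8⟩, q9⟩, hset⟩
      rw [hsabc] at hset
      have hx : x ∈ ({a, b, c} : Finset V) := by rw [← hset]; simp
      have hy : y ∈ ({a, b, c} : Finset V) := by rw [← hset]; simp
      have hz : z ∈ ({a, b, c} : Finset V) := by rw [← hset]; simp
      simp only [Finset.mem_insert, Finset.mem_singleton] at hx hy hz
      exact perm3 hx hy hz q6 q7 q8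
    · rintro (⟨rfl, rfl, rfl⟩ | ⟨rfl, rfl, rfl⟩ | ⟨rfl, rfl, rfl⟩ | ⟨rfl, rfl, rfl⟩ |
        ⟨rfl, rfl, rfl⟩ | ⟨rfl, rfl, rfl⟩)
      · exact ⟨⟨⟨hva, hvb, hvc, hab, hac, nab.symm, nac.symm, nbc⟩, hbc⟩, hsabc.symm⟩
      · exact ⟨⟨⟨hva, hvc, hvb, hac, hab, nac.symm, nab.symm, nbc.symm⟩, hcb⟩, e1⟩
      · exact ⟨⟨⟨hvb, hva, hvc, hba, hbc, nab, nbc.symm, nac⟩, hac⟩, e2⟩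
      · exact ⟨⟨⟨hvb, hvc, hva, hbc, hba, nbc.symm, nab, nac.symm⟩, hca⟩, e3⟩
      · exact ⟨⟨⟨hvc, hva, hvb, hca, hcb, nac, nbc, nab⟩, hab⟩, e4⟩
      · exact ⟨⟨⟨hvc, hvb, hva, hcb, hca, nbc, nac, nab.symm⟩, hba⟩, e5⟩
  rw [hfe]
  refine card_six ?_
  refine ⟨?_, ?_, ?_, ?_, ?_, ?_, ?_, ?_, ?_, ?_, ?_, ?_, ?_, ?_, ?_⟩ <;>
    simp [Prod.ext_iff, nab, nac, nbc, nab.symm, nac.symm, nbc.symm]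

private lemma fiber2 [DecidableRel G.Adj] {v : V} {s : Finset V}
    {a b c : V} (hsabc : s = {a, b, c}) (nab : a ≠ b) (nac : a ≠ c) (nbc : b ≠ c)
    (hva : G.Adj v a) (hvb : G.Adj v b) (hvc : G.Adj v c)
    (hab : G.Adj a b) (hac : ¬G.Adj a c) (hbc : ¬G.Adj b c) :
    ((Finset.univ : Finset (V × V × V)).filter (fun p =>
      ((G.Adj v p.1 ∧ G.Adj v p.2.1 ∧ G.Adj v p.2.2 ∧
      ¬G.Adj p.1 p.2.1 ∧ ¬G.Adj p.1 p.2.2 ∧ p.2.1 ≠ p.1 ∧ p.2.2 ≠ p.1 ∧ p.2.1 ≠ p.2.2) ∧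
      G.Adj p.2.1 p.2.2) ∧ ({p.1, p.2.1, p.2.2} : Finset V) = s)).card = 2 := by
  have hba : G.Adj b a := hab.symm
  have hca : ¬G.Adj c a := fun h => hac h.symm
  have hcb : ¬G.Adj c b := fun h => hbc h.symm
  have e4 : ({c, a, b} : Finset V) = s := by
    rw [Finset.insert_comm c a, Finset.pair_comm c b, hsabc]
  have e5 : ({c, b, a} : Finset V) = s := by
    rw [Finset.pair_comm b a, Finset.insert_comm c a, Finset.pair_comm c b, hsabc]
  have hfe : ((Finset.univ : Finset (V × V × V)).filter (fun p =>
      ((G.Adj v p.1 ∧ G.Adj v p.2.1 ∧ G.Adj v p.2.2 ∧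
      ¬G.Adj p.1 p.2.1 ∧ ¬G.Adj p.1 p.2.2 ∧ p.2.1 ≠ p.1 ∧ p.2.2 ≠ p.1 ∧ p.2.1 ≠ p.2.2) ∧
      G.Adj p.2.1 p.2.2) ∧ ({p.1, p.2.1, p.2.2} : Finset V) = s))
      = ({(c,a,b),(c,b,a)} : Finset (V × V × V)) := by
    ext ⟨x, y, z⟩
    simp only [Finset.mem_filter, Finset.mem_univ, true_and, Finset.mem_insert,
      Finset.mem_singleton, Prod.mk.injEq]
    constructor
    · rintro ⟨⟨⟨q1, q2, q3, q4, q5, q6, q7, q8⟩, q9⟩, hset⟩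
      rw [hsabc] at hset
      have hx : x ∈ ({a, b, c} : Finset V) := by rw [← hset]; simp
      have hy : y ∈ ({a, b, c} : Finset V) := by rw [← hset]; simp
      have hz : z ∈ ({a, b, c} : Finset V) := by rw [← hset]; simp
      simp only [Finset.mem_insert, Finset.mem_singleton] at hx hy hz
      rcases perm3 hx hy hz q6 q7 q8 with ⟨rfl, rfl, rfl⟩ | ⟨rfl, rfl, rfl⟩ |
        ⟨rfl, rfl, rfl⟩ | ⟨rfl, rfl, rfl⟩ | ⟨rfl, rfl, rfl⟩ | ⟨rfl, rfl, rfl⟩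
      · exact absurd q9 hbc
      · exact absurd q9 hcb
      · exact absurd q9 hac
      · exact absurd q9 hca
      · exact Or.inl ⟨rfl, rfl, rfl⟩
      · exact Or.inr ⟨rfl, rfl, rfl⟩
    · rintro (⟨rfl, rfl, rfl⟩ | ⟨rfl, rfl, rfl⟩)
      · exact ⟨⟨⟨hvc, hva, hvb, hca, hcb, nac, nbc, nab⟩, hab⟩, e4⟩
      · exact ⟨⟨⟨hvc, hvb, hva, hcb, hca, nbc, nac, nab.symm⟩, hba⟩, e5⟩
  rw [hfe]
  rw [Finset.card_insert_of_notMem (by simp [Prod.ext_iff, nab]), Finset.card_singleton]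

end Fibers

set_option maxHeartbeats 1000000 in
theorem statement4 [DecidableRel G.Adj] (v : V) :
    ∑ a ∈ G.neighborFinset v, Nat.choose (n2c G v a) 2 = 3 * F6' G v + F8' G v := by
  classical
  -- Step 1 : total count = ∑ n2c * (n2c - 1)
  have h1 : ((Finset.univ : Finset (V × V × V)).filter (fun p =>
      (G.Adj v p.1 ∧ G.Adj v p.2.1 ∧ G.Adj v p.2.2 ∧
      ¬G.Adj p.1 p.2.1 ∧ ¬G.Adj p.1 p.2.2 ∧ p.2.1 ≠ p.1 ∧ p.2.2 ≠ p.1 ∧ p.2.1 ≠ p.2.2))).card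
      = ∑ a ∈ G.neighborFinset v, (n2c G v a * (n2c G v a - 1)) := by
    rw [Finset.card_eq_sum_card_fiberwise (f := fun p => p.1) (t := G.neighborFinset v)
      (fun p hp => by
        rw [Finset.mem_coe, Finset.mem_filter] at hp
        exact (G.mem_neighborFinset v p.1).2 hp.2.1)]
    refine Finset.sum_congr rfl fun a ha => ?_
    have hva : G.Adj v a := (G.mem_neighborFinset v a).1 ha
    have hcc : (Finset.univ.filter fun x => G.Adj v x ∧ ¬G.Adj a x ∧ x ≠ a).card
        = n2c G v a := by
      unfold n2c
      exact (congrArg Finset.card (Finset.filter_congr_decidable _ _ _)).symm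
    have hfe : (((Finset.univ : Finset (V × V × V)).filter (fun p =>
        (G.Adj v p.1 ∧ G.Adj v p.2.1 ∧ G.Adj v p.2.2 ∧
      ¬G.Adj p.1 p.2.1 ∧ ¬G.Adj p.1 p.2.2 ∧ p.2.1 ≠ p.1 ∧ p.2.2 ≠ p.1 ∧ p.2.1 ≠ p.2.2))).filter fun p => p.1 = a)
        = {a} ×ˢ (Finset.univ.filter fun x => G.Adj v x ∧ ¬G.Adj a x ∧ x ≠ a).offDiag := by
      ext ⟨x, y, z⟩
      simp only [Finset.mem_filter, Finset.mem_univ, true_and, Finset.mem_product,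
        Finset.mem_singleton, Finset.mem_offDiag]
      constructor
      · rintro ⟨⟨h1, h2, h3, h4, h5, h6, h7, h8⟩, rfl⟩
        exact ⟨rfl, ⟨h2, h4, h6⟩, ⟨h3, h5, h7⟩, h8⟩
      · rintro ⟨rfl, ⟨h2, h4, h6⟩, ⟨h3, h5, h7⟩, h8⟩
        exact ⟨⟨hva, h2, h3, h4, h5, h6, h7, h8⟩, rfl⟩
    rw [hfe, Finset.card_product, Finset.card_singleton, one_mul, Finset.offDiag_card,
      ← Nat.mul_pred, hcc, Nat.pred_eq_sub_one]
  -- F6' and F8' with ambient decidability instances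
  have hF6 : F6' G v = (((Finset.univ : Finset V).powersetCard 3).filter
      (fun s => v ∉ s ∧ ∃ a ∈ s, ∃ b ∈ s, ∃ c ∈ s, s = {a, b, c} ∧
        (G.Adj v a ∧ G.Adj v b ∧ G.Adj v c ∧ ¬G.Adj a b ∧ ¬G.Adj a c ∧ ¬G.Adj b c))).card := by
    unfold F6' cnt3
    exact congrArg Finset.card (Finset.filter_congr_decidable _ _ _)
  have hF8 : F8' G v = (((Finset.univ : Finset V).powersetCard 3).filter
      (fun s => v ∉ s ∧ ∃ a ∈ s, ∃ b ∈ s, ∃ c ∈ s, s = {a, b, c} ∧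
        (G.Adj v a ∧ G.Adj v b ∧ G.Adj a b ∧ G.Adj v c ∧ ¬G.Adj a c ∧ ¬G.Adj b c))).card := by
    unfold F8' cnt3
    exact congrArg Finset.card (Finset.filter_congr_decidable _ _ _)
  -- Step 2 : the non-adjacent part counts 6 * F6'
  have h6 : ((Finset.univ : Finset (V × V × V)).filter (fun p =>
      (G.Adj v p.1 ∧ G.Adj v p.2.1 ∧ G.Adj v p.2.2 ∧
      ¬G.Adj p.1 p.2.1 ∧ ¬G.Adj p.1 p.2.2 ∧ p.2.1 ≠ p.1 ∧ p.2.2 ≠ p.1 ∧ p.2.1 ≠ p.2.2) ∧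
      ¬G.Adj p.2.1 p.2.2)).card = F6' G v * 6 := by
    rw [hF6]
    have hmemb : ∀ p ∈ ((Finset.univ : Finset (V × V × V)).filter (fun p =>
        (G.Adj v p.1 ∧ G.Adj v p.2.1 ∧ G.Adj v p.2.2 ∧
      ¬G.Adj p.1 p.2.1 ∧ ¬G.Adj p.1 p.2.2 ∧ p.2.1 ≠ p.1 ∧ p.2.2 ≠ p.1 ∧ p.2.1 ≠ p.2.2) ∧
        ¬G.Adj p.2.1 p.2.2)),
        ({p.1, p.2.1, p.2.2} : Finset V) ∈ (((Finset.univ : Finset V).powersetCard 3).filter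
        (fun s => v ∉ s ∧ ∃ a ∈ s, ∃ b ∈ s, ∃ c ∈ s, s = {a, b, c} ∧
          (G.Adj v a ∧ G.Adj v b ∧ G.Adj v c ∧ ¬G.Adj a b ∧ ¬G.Adj a c ∧ ¬G.Adj b c))) := by
      rintro ⟨x, y, z⟩ hp
      simp only [Finset.mem_filter, Finset.mem_univ, true_and] at hp
      obtain ⟨⟨h1, h2, h3, h4, h5, h6, h7, h8⟩, h9⟩ := hp
      have hcard : ({x, y, z} : Finset V).card = 3 :=
        card_three (fun h => h6 h.symm) (fun h => h7 h.symm) (fun h => h8 h)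
      refine Finset.mem_filter.2 ⟨Finset.mem_powersetCard.2 ⟨Finset.subset_univ _, hcard⟩,
        ?_, x, by simp, y, by simp, z, by simp, rfl, h1, h2, h3, h4, h5, h9⟩
      simp only [Finset.mem_insert, Finset.mem_singleton]
      push_neg
      exact ⟨h1.ne, h2.ne, h3.ne⟩
    rw [Finset.card_eq_sum_card_fiberwise hmemb]
    have key : ∀ s ∈ (((Finset.univ : Finset V).powersetCard 3).filter
        (fun s => v ∉ s ∧ ∃ a ∈ s, ∃ b ∈ s, ∃ c ∈ s, s = {a, b, c} ∧
          (G.Adj v a ∧ G.Adj v b ∧ G.Adj v c ∧ ¬G.Adj a b ∧ ¬G.Adj a c ∧ ¬G.Adj b c))),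
        ((((Finset.univ : Finset (V × V × V)).filter (fun p =>
          (G.Adj v p.1 ∧ G.Adj v p.2.1 ∧ G.Adj v p.2.2 ∧
      ¬G.Adj p.1 p.2.1 ∧ ¬G.Adj p.1 p.2.2 ∧ p.2.1 ≠ p.1 ∧ p.2.2 ≠ p.1 ∧ p.2.1 ≠ p.2.2) ∧
          ¬G.Adj p.2.1 p.2.2))).filter
        (fun p => ({p.1, p.2.1, p.2.2} : Finset V) = s)).card = 6 := by
      intro s hs
      simp only [Finset.mem_filter, Finset.mem_powersetCard] at hs
      obtain ⟨⟨-, hcard⟩, hv, a, -, b, -, c, -, hsabc, hva, hvb, hvc, hab, hac, hbc⟩ := hs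
      rw [hsabc] at hcard
      obtain ⟨nab, nac, nbc⟩ := card3_ne hcard
      rw [Finset.filter_filter]
      exact fiber6 hsabc nab nac nbc hva hvb hvc hab hac hbc
    rw [Finset.sum_congr rfl key, Finset.sum_const, smul_eq_mul, mul_comm]
  -- Step 3 : the adjacent part counts 2 * F8'
  have h8 : ((Finset.univ : Finset (V × V × V)).filter (fun p =>
      (G.Adj v p.1 ∧ G.Adj v p.2.1 ∧ G.Adj v p.2.2 ∧
      ¬G.Adj p.1 p.2.1 ∧ ¬G.Adj p.1 p.2.2 ∧ p.2.1 ≠ p.1 ∧ p.2.2 ≠ p.1 ∧ p.2.1 ≠ p.2.2) ∧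
      G.Adj p.2.1 p.2.2)).card = F8' G v * 2 := by
    rw [hF8]
    have hmemb : ∀ p ∈ ((Finset.univ : Finset (V × V × V)).filter (fun p =>
        (G.Adj v p.1 ∧ G.Adj v p.2.1 ∧ G.Adj v p.2.2 ∧
      ¬G.Adj p.1 p.2.1 ∧ ¬G.Adj p.1 p.2.2 ∧ p.2.1 ≠ p.1 ∧ p.2.2 ≠ p.1 ∧ p.2.1 ≠ p.2.2) ∧
        G.Adj p.2.1 p.2.2)),
        ({p.1, p.2.1, p.2.2} : Finset V) ∈ (((Finset.univ : Finset V).powersetCard 3).filter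
        (fun s => v ∉ s ∧ ∃ a ∈ s, ∃ b ∈ s, ∃ c ∈ s, s = {a, b, c} ∧
          (G.Adj v a ∧ G.Adj v b ∧ G.Adj a b ∧ G.Adj v c ∧ ¬G.Adj a c ∧ ¬G.Adj b c))) := by
      rintro ⟨x, y, z⟩ hp
      simp only [Finset.mem_filter, Finset.mem_univ, true_and] at hp
      obtain ⟨⟨h1, h2, h3, h4, h5, h6, h7, h8⟩, h9⟩ := hp
      have hcard : ({x, y, z} : Finset V).card = 3 :=
        card_three (fun h => h6 h.symm) (fun h => h7 h.symm) (fun h => h8 h)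
      have hset2 : ({x, y, z} : Finset V) = ({y, z, x} : Finset V) := by
        rw [Finset.insert_comm x y, Finset.pair_comm x z]
      refine Finset.mem_filter.2 ⟨Finset.mem_powersetCard.2 ⟨Finset.subset_univ _, hcard⟩,
        ?_, y, by simp, z, by simp, x, by simp, hset2,
        h2, h3, h9, h1, fun h => h4 h.symm, fun h => h5 h.symm⟩
      simp only [Finset.mem_insert, Finset.mem_singleton]
      push_neg
      exact ⟨h1.ne, h2.ne, h3.ne⟩
    rw [Finset.card_eq_sum_card_fiberwise hmemb]
    have key : ∀ s ∈ (((Finset.univ : Finset V).powersetCard 3).filter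
        (fun s => v ∉ s ∧ ∃ a ∈ s, ∃ b ∈ s, ∃ c ∈ s, s = {a, b, c} ∧
          (G.Adj v a ∧ G.Adj v b ∧ G.Adj a b ∧ G.Adj v c ∧ ¬G.Adj a c ∧ ¬G.Adj b c))),
        ((((Finset.univ : Finset (V × V × V)).filter (fun p =>
          (G.Adj v p.1 ∧ G.Adj v p.2.1 ∧ G.Adj v p.2.2 ∧
      ¬G.Adj p.1 p.2.1 ∧ ¬G.Adj p.1 p.2.2 ∧ p.2.1 ≠ p.1 ∧ p.2.2 ≠ p.1 ∧ p.2.1 ≠ p.2.2) ∧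
          G.Adj p.2.1 p.2.2))).filter
        (fun p => ({p.1, p.2.1, p.2.2} : Finset V) = s)).card = 2 := by
      intro s hs
      simp only [Finset.mem_filter, Finset.mem_powersetCard] at hs
      obtain ⟨⟨-, hcard⟩, hv, a, -, b, -, c, -, hsabc, hva, hvb, hab, hvc, hac, hbc⟩ := hs
      rw [hsabc] at hcard
      obtain ⟨nab, nac, nbc⟩ := card3_ne hcard
      rw [Finset.filter_filter]
      exact fiber2 hsabc nab nac nbc hva hvb hvc hab hac hbc
    rw [Finset.sum_congr rfl key, Finset.sum_const, smul_eq_mul, mul_comm]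
  -- Step 4 : combine
  have hsplit : ((Finset.univ : Finset (V × V × V)).filter (fun p =>
      (G.Adj v p.1 ∧ G.Adj v p.2.1 ∧ G.Adj v p.2.2 ∧
      ¬G.Adj p.1 p.2.1 ∧ ¬G.Adj p.1 p.2.2 ∧ p.2.1 ≠ p.1 ∧ p.2.2 ≠ p.1 ∧ p.2.1 ≠ p.2.2) ∧
      G.Adj p.2.1 p.2.2)).card
      + ((Finset.univ : Finset (V × V × V)).filter (fun p =>
      (G.Adj v p.1 ∧ G.Adj v p.2.1 ∧ G.Adj v p.2.2 ∧
      ¬G.Adj p.1 p.2.1 ∧ ¬G.Adj p.1 p.2.2 ∧ p.2.1 ≠ p.1 ∧ p.2.2 ≠ p.1 ∧ p.2.1 ≠ p.2.2) ∧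
      ¬G.Adj p.2.1 p.2.2)).card
      = ((Finset.univ : Finset (V × V × V)).filter (fun p =>
      (G.Adj v p.1 ∧ G.Adj v p.2.1 ∧ G.Adj v p.2.2 ∧
      ¬G.Adj p.1 p.2.1 ∧ ¬G.Adj p.1 p.2.2 ∧ p.2.1 ≠ p.1 ∧ p.2.2 ≠ p.1 ∧ p.2.1 ≠ p.2.2))).card := by
    have hs := Finset.card_filter_add_card_filter_not
      (s := (Finset.univ : Finset (V × V × V)).filter (fun p =>
        G.Adj v p.1 ∧ G.Adj v p.2.1 ∧ G.Adj v p.2.2 ∧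
        ¬G.Adj p.1 p.2.1 ∧ ¬G.Adj p.1 p.2.2 ∧ p.2.1 ≠ p.1 ∧ p.2.2 ≠ p.1 ∧ p.2.1 ≠ p.2.2))
      (p := fun p => G.Adj p.2.1 p.2.2)
    rw [Finset.filter_filter, Finset.filter_filter] at hs
    exact hs
  have hdouble : 2 * (∑ a ∈ G.neighborFinset v, Nat.choose (n2c G v a) 2)
      = ∑ a ∈ G.neighborFinset v, (n2c G v a * (n2c G v a - 1)) := by
    rw [Finset.mul_sum]
    exact Finset.sum_congr rfl fun a _ => two_mul_choose_two _
  omega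

end FourProfiles
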